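/- Accuracy of the compensated Horner algorithm, modular form (Theorem 3): Let u be a real number with 0 < u, let n be a positive integer with 2n·u < 1, and let P, P̃, r̂, c, ĉ, r̄ be real numbers with P̃ ≥ 0. Suppose that P = r̂ + c, that |ĉ − c| ≤ γ_{2n−1}·γ_{2n}·P̃, and that r̄ = (r̂ + ĉ)·(1+ε) for some ε with |ε| ≤ u. Then |r̄ − P| ≤ u·|P| + γ_{2n}²·P̃. -/
import Mathlib


/-- Accuracy of the compensated Horner algorithm, modular form (Theorem 3).
Here `γ_k = k·u/(1 − k·u)`, `P` is the exact polynomial value, `P̃` the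
absolute-coefficient evaluation, `r̂` the Horner result, `c` the exact error,
`ĉ` the computed correcting term and `r̄` the compensated result. -/
theorem compensated_horner_accuracy
    (u : ℝ) (hu : 0 < u) (n : ℕ) (hn : 1 ≤ n) (h2nu : 2 * (n : ℝ) * u < 1)
    (P Ptilde rhat c chat rbar ε : ℝ) (hPt : 0 ≤ Ptilde)
    (hP : P = rhat + c)
    (hc : |chat - c| ≤
      ((2 * (n : ℝ) - 1) * u / (1 - (2 * (n : ℝ) - 1) * u)) *
        (2 * (n : ℝ) * u / (1 - 2 * (n : ℝ) * u)) * Ptilde)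
    (hε : |ε| ≤ u)
    (hrbar : rbar = (rhat + chat) * (1 + ε)) :
    |rbar - P| ≤ u * |P| +
      (2 * (n : ℝ) * u / (1 - 2 * (n : ℝ) * u)) ^ 2 * Ptilde := by
  have hm : (1:ℝ) ≤ (n:ℝ) := by exact_mod_cast hn
  set m : ℝ := (n:ℝ) with hmdef
  have hd2 : 0 < 1 - 2 * m * u := by linarith
  have hd1 : 0 < 1 - (2 * m - 1) * u := by nlinarith
  have hεle := abs_le.mp hε
  have hu1 : u < 1 := by nlinarith
  have h1ε : 0 ≤ 1 + ε := by linarith [hεle.1]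
  have key : rbar - P = ε * P + (1 + ε) * (chat - c) := by
    rw [hrbar, hP]; ring
  have hg2 : 0 ≤ 2 * m * u / (1 - 2 * m * u) := by positivity
  have hg1 : 0 ≤ (2 * m - 1) * u / (1 - (2 * m - 1) * u) := by
    apply div_nonneg _ hd1.le; nlinarith
  -- core inequality: (1+u) * γ_{2n-1} ≤ γ_{2n}
  have hcore : (1 + u) * ((2 * m - 1) * u / (1 - (2 * m - 1) * u)) ≤
      2 * m * u / (1 - 2 * m * u) := by
    rw [mul_div_assoc', div_le_div_iff₀ hd1 hd2]
    nlinarith [mul_pos hu hd2, sq_nonneg u]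
  have hA : |ε| * |P| ≤ u * |P| := mul_le_mul_of_nonneg_right hε (abs_nonneg P)
  have hB1 : (1 + ε) * |chat - c| ≤ (1 + u) * |chat - c| :=
    mul_le_mul_of_nonneg_right (by linarith [hεle.2]) (abs_nonneg _)
  have hB2 : (1 + u) * |chat - c| ≤ (1 + u) *
      (((2 * m - 1) * u / (1 - (2 * m - 1) * u)) *
        (2 * m * u / (1 - 2 * m * u)) * Ptilde) :=
    mul_le_mul_of_nonneg_left hc (by linarith)
  have hC : ((1 + u) * ((2 * m - 1) * u / (1 - (2 * m - 1) * u)) *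
      (2 * m * u / (1 - 2 * m * u))) * Ptilde ≤
      ((2 * m * u / (1 - 2 * m * u)) * (2 * m * u / (1 - 2 * m * u))) * Ptilde :=
    mul_le_mul_of_nonneg_right (mul_le_mul_of_nonneg_right hcore hg2) hPt
  have habs : |rbar - P| ≤ |ε * P| + |(1 + ε) * (chat - c)| := by
    rw [key]; exact abs_add_le _ _
  rw [abs_mul, abs_mul, abs_of_nonneg h1ε] at habs
  nlinarith [habs, hA, hB1, hB2, hC]
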